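/- Let n ≥ 1, let Σ be a real symmetric positive definite n×n matrix, let Θ be a real antisymmetric n×n matrix, and let w ∈ ℝⁿ. Set ζ := (−Σ + iΘ) w ∈ ℂⁿ. Then π^{−n/2} √(det Σ) ∫_{ℝⁿ} e^{−uᵀΣu} sin(uᵀΘw) e^{−uᵀΣw} u uᵀ du = Im( (1/2) e^{(1/4) ζᵀΣ⁻¹ζ} ( Σ⁻¹ + (1/2) Σ⁻¹ ζ ζᵀ Σ⁻¹ ) ), where the matrix-valued integral is taken entrywise and converges absolutely. Equivalently, the left-hand side equals (1/(2i)) ( φ''_Σ((−Σ + iΘ)w) − φ''_Σ(−(Σ + iΘ)w) ), where φ''_Σ(z) := (1/2) e^{(1/4) zᵀΣ⁻¹z} ( Σ⁻¹ + (1/2) Σ⁻¹ z zᵀ Σ⁻¹ ). -/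

import Mathlib

open MeasureTheory Matrix Real Filter Complex Topology

noncomputable section

/-- Quadratic form `uᵀ A u`. -/
def qf {n : ℕ} (A : Matrix (Fin n) (Fin n) ℝ) (u : Fin n → ℝ) : ℝ := u ⬝ᵥ A.mulVec u

/-- Complex bilinear form `zᵀ A z` (no conjugation) for a real matrix `A`. -/
def qfC {n : ℕ} (A : Matrix (Fin n) (Fin n) ℝ) (z : Fin n → ℂ) : ℂ :=
  z ⬝ᵥ (A.map (fun a => (a : ℂ))).mulVec z

/-- The normalizing constant `π^{-n/2} √(det Σ)`. -/
def gaussConst {n : ℕ} (Sg : Matrix (Fin n) (Fin n) ℝ) : ℝ :=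
  (Real.sqrt (π ^ n))⁻¹ * Real.sqrt Sg.det

/-- `(−Σ + iΘ) w ∈ ℂⁿ`. -/
def zetaP {n : ℕ} (Sg Th : Matrix (Fin n) (Fin n) ℝ) (w : Fin n → ℝ) : Fin n → ℂ :=
  (Sg.map (fun a => (-a : ℂ)) + Complex.I • Th.map (fun a => (a : ℂ))).mulVec
    (fun k => (w k : ℂ))

/-- `−(Σ + iΘ) w ∈ ℂⁿ`. -/
def zetaM {n : ℕ} (Sg Th : Matrix (Fin n) (Fin n) ℝ) (w : Fin n → ℝ) : Fin n → ℂ :=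
  (Sg.map (fun a => (-a : ℂ)) - Complex.I • Th.map (fun a => (a : ℂ))).mulVec
    (fun k => (w k : ℂ))

/-- The Hessian `φ''_Σ(z) = (1/2) e^{(1/4) zᵀΣ⁻¹z} (Σ⁻¹ + (1/2) Σ⁻¹ z zᵀ Σ⁻¹)` of the complex
moment-generating function of the Gaussian density `π^{-n/2}√(det Σ) e^{-uᵀΣu}`. -/
def mgfHess {n : ℕ} (Sg : Matrix (Fin n) (Fin n) ℝ) (z : Fin n → ℂ) :
    Matrix (Fin n) (Fin n) ℂ :=
  ((1/2 : ℂ) * Complex.exp ((1/4 : ℂ) * qfC Sg⁻¹ z)) •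
    (Sg⁻¹.map (fun a => (a : ℂ)) +
      (1/2 : ℂ) • vecMulVec ((Sg⁻¹.map (fun a => (a : ℂ))).mulVec z)
        (vecMul z (Sg⁻¹.map (fun a => (a : ℂ)))))

lemma norm_pow_cexp (p : ℕ) (η : ℂ) (x : ℝ) :
    ‖(x:ℂ)^p * Complex.exp (-(x:ℂ)^2 + η*x)‖ = |x|^p * Real.exp (-x^2 + η.re*x) := by
  rw [norm_mul, norm_pow, Complex.norm_exp, Complex.norm_real, Real.norm_eq_abs]
  congr 2
  simp [Complex.add_re, Complex.neg_re, ← Complex.ofReal_pow, Complex.mul_re]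

lemma pow_cexp_bound (p : ℕ) (η : ℂ) (x : ℝ) :
    ‖(x:ℂ)^p * Complex.exp (-(x:ℂ)^2 + η*x)‖ ≤
      Real.exp (η.re^2/2) * (|x|^p * Real.exp (-(1/2) * x^2)) := by
  rw [norm_pow_cexp]
  have h : -x^2 + η.re*x ≤ η.re^2/2 + -(1/2) * x^2 := by nlinarith [sq_nonneg (x - η.re)]
  calc |x|^p * Real.exp (-x^2 + η.re*x) ≤ |x|^p * Real.exp (η.re^2/2 + -(1/2) * x^2) := by
        gcongr
    _ = Real.exp (η.re^2/2) * (|x|^p * Real.exp (-(1/2) * x^2)) := by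
        rw [Real.exp_add]; ring

lemma abs_aux (p : ℕ) (x : ℝ) : |x ^ (p:ℝ) * Real.exp (-(1/2) * x^2)| =
    |x|^p * Real.exp (-(1/2) * x^2) := by
  rw [abs_mul, Real.rpow_natCast, _root_.abs_pow, abs_of_pos (Real.exp_pos _)]

lemma integrable_pow_mul_cexp (p : ℕ) (η : ℂ) :
    Integrable fun x : ℝ => (x:ℂ)^p * Complex.exp (-(x:ℂ)^2 + η*x) := by
  have hs : (-1:ℝ) < (p:ℝ) := lt_of_lt_of_le neg_one_lt_zero (Nat.cast_nonneg p)
  have hi : Integrable (fun x:ℝ =>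
      Real.exp (η.re^2/2) * |x ^ (p:ℝ) * Real.exp (-(1/2) * x^2)|) :=
    ((integrable_rpow_mul_exp_neg_mul_sq (b := 1/2) (by norm_num) hs).abs).const_mul _
  refine hi.mono' ?_ (ae_of_all _ fun x => ?_)
  · apply Continuous.aestronglyMeasurable
    exact (Complex.continuous_ofReal.pow p).mul (Complex.continuous_exp.comp
      (((Complex.continuous_ofReal.pow 2).neg).add (continuous_const.mul
        Complex.continuous_ofReal)))
  · rw [abs_aux]
    exact pow_cexp_bound p η x

lemma tendsto_aux_atTop (p : ℕ) :
    Tendsto (fun x:ℝ => |x| ^ p * Real.exp (-(1/2) * x^2)) atTop (𝓝 0) := by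
  have h0 : Tendsto (fun x:ℝ => x ^ (p:ℝ) * Real.exp (-(1/2) * x^2)) atTop (𝓝 0) := by
    refine ((rpow_mul_exp_neg_mul_sq_isLittleO_exp_neg (by norm_num) (p:ℝ)).isBigO).trans_tendsto ?_
    have h : Tendsto (fun x:ℝ => (1/2)*x) atTop atTop :=
      Tendsto.const_mul_atTop (by norm_num) tendsto_id
    simpa [Function.comp_def, neg_mul] using tendsto_exp_neg_atTop_nhds_zero.comp h
  apply h0.congr'
  filter_upwards [eventually_gt_atTop (0:ℝ)] with x hx
  rw [Real.rpow_natCast, abs_of_pos hx]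

lemma tendsto_pow_mul_cexp_atTop (p : ℕ) (η : ℂ) :
    Tendsto (fun x : ℝ => (x:ℂ)^p * Complex.exp (-(x:ℂ)^2 + η*x)) atTop (𝓝 0) :=
  squeeze_zero_norm (pow_cexp_bound p η)
    (by simpa using (tendsto_aux_atTop p).const_mul (Real.exp (η.re^2/2)))

lemma tendsto_pow_mul_cexp_atBot (p : ℕ) (η : ℂ) :
    Tendsto (fun x : ℝ => (x:ℂ)^p * Complex.exp (-(x:ℂ)^2 + η*x)) atBot (𝓝 0) := by
  refine squeeze_zero_norm (pow_cexp_bound p η) ?_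
  have h1 : Tendsto (fun x:ℝ => |x| ^ p * Real.exp (-(1/2) * x^2)) atBot (𝓝 0) := by
    have := (tendsto_aux_atTop p).comp tendsto_neg_atBot_atTop
    simpa [Function.comp_def] using this
  simpa using h1.const_mul (Real.exp (η.re^2/2))

lemma integral_deriv_eq_zero (f f' : ℝ → ℂ) (hd : ∀ x, HasDerivAt f (f' x) x)
    (hi : Integrable f') (hbot : Tendsto f atBot (𝓝 0)) (htop : Tendsto f atTop (𝓝 0)) :
    ∫ x, f' x = 0 := by
  rw [← intervalIntegral.integral_Iic_add_Ioi (b := (0:ℝ)) hi.integrableOn hi.integrableOn,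
    integral_Iic_of_hasDerivAt_of_tendsto' (fun x _ => hd x) hi.integrableOn hbot,
    integral_Ioi_of_hasDerivAt_of_tendsto' (fun x _ => hd x) hi.integrableOn htop]
  ring


lemma gauss0 (η : ℂ) : ∫ x:ℝ, Complex.exp (-(x:ℂ)^2 + η*x)
    = (Real.sqrt π : ℂ) * Complex.exp (η^2/4) := by
  have h := integral_cexp_quadratic (b := -1) (by norm_num) η 0
  have h2 : ∀ x:ℝ, (-1:ℂ) * x^2 + η*x + 0 = -(x:ℂ)^2 + η*x := by intro x; ring
  simp only [h2] at h
  rw [h]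
  congr 1
  · rw [show ((π:ℂ) / -(-1)) = ((π:ℝ):ℂ) by norm_num,
      show ((π:ℂ) ^ (1/2 : ℂ)) = ((π ^ (1/2:ℝ) : ℝ) : ℂ) by
        rw [Complex.ofReal_cpow Real.pi_pos.le]; norm_num,
      ← Real.sqrt_eq_rpow]
  · congr 1
    ring


lemma hasDerivAt_coe (x : ℝ) : HasDerivAt (fun x:ℝ => (x:ℂ)) 1 x := by
  simpa using HasDerivAt.ofReal_comp (hasDerivAt_id x)

lemma hasDerivAt_E (η : ℂ) (x : ℝ) :
    HasDerivAt (fun x:ℝ => -(x:ℂ)^2 + η*x) (-(2*x) + η) x := by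
  have hx := hasDerivAt_coe x
  have h4 := ((hx.mul hx).neg).add (HasDerivAt.const_mul η hx)
  convert h4 using 2 with y
  · rfl
  · simp only [Pi.add_apply, Pi.neg_apply, Pi.mul_apply]; ring
  · ring
  · ring

lemma I0 (η : ℂ) : Integrable fun x:ℝ => Complex.exp (-(x:ℂ)^2 + η*x) := by
  simpa using integrable_pow_mul_cexp 0 η
lemma I1 (η : ℂ) : Integrable fun x:ℝ => (x:ℂ) * Complex.exp (-(x:ℂ)^2 + η*x) := by
  simpa using integrable_pow_mul_cexp 1 η
lemma I2 (η : ℂ) : Integrable fun x:ℝ => (x:ℂ)^2 * Complex.exp (-(x:ℂ)^2 + η*x) :=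
  integrable_pow_mul_cexp 2 η

lemma gauss1 (η : ℂ) : ∫ x:ℝ, (x:ℂ) * Complex.exp (-(x:ℂ)^2 + η*x)
    = (Real.sqrt π : ℂ) * (η/2) * Complex.exp (η^2/4) := by
  have key : ∫ x:ℝ, (η * Complex.exp (-(x:ℂ)^2 + η*x)
      - 2 * ((x:ℂ) * Complex.exp (-(x:ℂ)^2 + η*x))) = 0 := by
    apply integral_deriv_eq_zero (fun x:ℝ => Complex.exp (-(x:ℂ)^2 + η*x))
    · intro x
      have := (hasDerivAt_E η x).cexp
      convert this using 1
      ring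
    · exact ((I0 η).const_mul η).sub ((I1 η).const_mul 2)
    · simpa using tendsto_pow_mul_cexp_atBot 0 η
    · simpa using tendsto_pow_mul_cexp_atTop 0 η
  rw [integral_sub ((I0 η).const_mul η) ((I1 η).const_mul 2), integral_const_mul,
    integral_const_mul, gauss0, sub_eq_zero] at key
  linear_combination (-(1:ℂ)/2) * key

lemma gauss2 (η : ℂ) : ∫ x:ℝ, (x:ℂ)^2 * Complex.exp (-(x:ℂ)^2 + η*x)
    = (Real.sqrt π : ℂ) * (1/2 + η^2/4) * Complex.exp (η^2/4) := by
  have key : ∫ x:ℝ, (Complex.exp (-(x:ℂ)^2 + η*x)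
      + η * ((x:ℂ) * Complex.exp (-(x:ℂ)^2 + η*x))
      - 2 * ((x:ℂ)^2 * Complex.exp (-(x:ℂ)^2 + η*x))) = 0 := by
    apply integral_deriv_eq_zero (fun x:ℝ => (x:ℂ) * Complex.exp (-(x:ℂ)^2 + η*x))
    · intro x
      have := (hasDerivAt_coe x).mul (hasDerivAt_E η x).cexp
      convert this using 1
      · rfl
      · rfl
      · ring
    · exact (((I0 η).add ((I1 η).const_mul η)).sub ((I2 η).const_mul 2))
    · simpa using tendsto_pow_mul_cexp_atBot 1 η
    · simpa using tendsto_pow_mul_cexp_atTop 1 η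
  have iadd : Integrable (fun x:ℝ => Complex.exp (-(x:ℂ)^2 + η*x)
      + η * ((x:ℂ) * Complex.exp (-(x:ℂ)^2 + η*x))) := (I0 η).add ((I1 η).const_mul η)
  rw [integral_sub iadd ((I2 η).const_mul 2),
    integral_add (I0 η) ((I1 η).const_mul η), integral_const_mul, integral_const_mul,
    gauss0, gauss1, sub_eq_zero] at key
  linear_combination (-(1:ℂ)/2) * key


def Mm : ℕ → ℂ → ℂ := fun p η => if p = 0 then 1 else if p = 1 then η/2 else 1/2 + η^2/4

lemma gaussPow (p : ℕ) (hp : p ≤ 2) (η : ℂ) :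
    ∫ x:ℝ, (x:ℂ)^p * Complex.exp (-(x:ℂ)^2+η*x)
      = (Real.sqrt π:ℂ) * Complex.exp (η^2/4) * Mm p η := by
  interval_cases p
  · simp only [pow_zero, one_mul, Mm]
    rw [gauss0]
    norm_num
  · simp only [pow_one, Mm]
    rw [gauss1]
    norm_num
    ring
  · simp only [Mm]
    rw [gauss2]
    norm_num
    ring

variable {n : ℕ}

def pw (a b i : Fin n) : ℕ := (if i = a then 1 else 0) + (if i = b then 1 else 0)

lemma pw_le (a b i : Fin n) : pw a b i ≤ 2 := by
  unfold pw
  split <;> split <;> norm_num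

lemma prod_step (η : Fin n → ℂ) (a b : Fin n) (v : Fin n → ℝ) :
    (∏ i, ((v i:ℂ)^(pw a b i) * Complex.exp (-(v i:ℂ)^2 + η i * (v i:ℂ))))
      = Complex.exp (-∑ i, ((v i:ℂ))^2 + ∑ i, η i * (v i:ℂ)) * ((v a : ℝ):ℂ) * ((v b:ℝ):ℂ) := by
  rw [Finset.prod_mul_distrib, ← Complex.exp_sum]
  have hsum : ∑ i, (-(v i:ℂ)^2 + η i * (v i:ℂ))
      = -∑ i, ((v i:ℂ))^2 + ∑ i, η i * (v i:ℂ) := by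
    rw [Finset.sum_add_distrib, ← Finset.sum_neg_distrib]
  have hprod : (∏ i, (v i:ℂ)^(pw a b i)) = ((v a : ℝ):ℂ) * ((v b:ℝ):ℂ) := by
    have h1 : ∀ i : Fin n, (v i:ℂ)^(pw a b i)
        = (if i = a then (v i:ℂ) else 1) * (if i = b then (v i:ℂ) else 1) := by
      intro i
      by_cases h1 : i = a
      · subst h1
        by_cases h2 : i = b
        · subst h2
          simp [pw]
          ring
        · simp [pw, h2]
      · by_cases h2 : i = b
        · subst h2
          simp [pw, h1]
        · simp [pw, h1, h2]
    simp only [h1]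
    rw [Finset.prod_mul_distrib]
    simp [Finset.prod_ite_eq']
  rw [hsum, hprod]
  ring

lemma gaussN_integrable (η : Fin n → ℂ) (a b : Fin n) :
    Integrable (fun v : Fin n → ℝ =>
      Complex.exp (-∑ i, ((v i:ℂ))^2 + ∑ i, η i * (v i:ℂ)) * ((v a : ℝ):ℂ) * ((v b:ℝ):ℂ)) := by
  have h := Integrable.fintype_prod
    (f := fun (i : Fin n) (x : ℝ) => (x:ℂ)^(pw a b i) * Complex.exp (-(x:ℂ)^2 + η i * x))
    (fun i => integrable_pow_mul_cexp _ _)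
  apply h.congr
  filter_upwards with v
  exact prod_step η a b v

lemma Mm_prod (η : Fin n → ℂ) (a b : Fin n) :
    (∏ i, Mm (pw a b i) (η i)) = (if a = b then (1/2:ℂ) else 0) + η a * η b / 4 := by
  by_cases hab : a = b
  · subst hab
    have h1 : ∀ i : Fin n, Mm (pw a a i) (η i)
        = (if i = a then (1/2 + η i^2/4 : ℂ) else 1) := by
      intro i
      by_cases h : i = a <;> simp [pw, Mm, h]
    simp only [h1]
    simp [Finset.prod_ite_eq']
    ring
  · have h1 : ∀ i : Fin n, Mm (pw a b i) (η i)
        = (if i = a then (η i/2 : ℂ) else 1) * (if i = b then (η i/2 : ℂ) else 1) := by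
      intro i
      have hba : ¬ b = a := fun h => hab h.symm
      by_cases h1 : i = a
      · subst h1
        simp [pw, Mm, hab]
      · by_cases h2 : i = b
        · subst h2
          simp [pw, Mm, h1, hba]
        · simp [pw, Mm, h1, h2]
    simp only [h1]
    rw [Finset.prod_mul_distrib]
    simp [Finset.prod_ite_eq', hab]
    ring

lemma gaussN (η : Fin n → ℂ) (a b : Fin n) :
    ∫ v : Fin n → ℝ,
      Complex.exp (-∑ i, ((v i:ℂ))^2 + ∑ i, η i * (v i:ℂ)) * ((v a : ℝ):ℂ) * ((v b:ℝ):ℂ)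
      = (Real.sqrt π:ℂ)^n * Complex.exp ((∑ i, η i^2)/4) *
        ((if a = b then (1/2:ℂ) else 0) + η a * η b / 4) := by
  have hfun : (fun v : Fin n → ℝ =>
      Complex.exp (-∑ i, ((v i:ℂ))^2 + ∑ i, η i * (v i:ℂ)) * ((v a : ℝ):ℂ) * ((v b:ℝ):ℂ))
      = fun v => ∏ i, ((v i:ℂ)^(pw a b i) * Complex.exp (-(v i:ℂ)^2 + η i * (v i:ℂ))) :=
    funext fun v => (prod_step η a b v).symm
  rw [hfun, MeasureTheory.integral_fintype_prod_volume_eq_prod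
    (f := fun (i : Fin n) (x : ℝ) => (x:ℂ)^(pw a b i) * Complex.exp (-(x:ℂ)^2 + η i * x))]
  rw [Finset.prod_congr rfl (fun i _ => gaussPow (pw a b i) (pw_le a b i) (η i))]
  rw [Finset.prod_mul_distrib, Finset.prod_mul_distrib, Finset.prod_const, ← Complex.exp_sum,
    Mm_prod]
  congr 2
  · simp
  · rw [← Finset.sum_div]


lemma cov_integral {n : ℕ} (M : Matrix (Fin n) (Fin n) ℝ) (hM : M.det ≠ 0)
    (g : (Fin n → ℝ) → ℂ) (hg : Continuous g) :
    ∫ u, g u = |M.det|⁻¹ * ∫ v, g (M⁻¹.mulVec v) := by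
  have hmap := Real.map_matrix_volume_pi_eq_smul_volume_pi (M := M) hM
  have hφ : Continuous (Matrix.toLin' M) := LinearMap.continuous_of_finiteDimensional _
  have hH : Continuous (fun v => g (M⁻¹.mulVec v)) :=
    hg.comp (LinearMap.continuous_of_finiteDimensional (Matrix.toLin' M⁻¹))
  have h1 : ∫ v, g (M⁻¹.mulVec v) ∂(Measure.map (Matrix.toLin' M) volume)
      = ∫ u, g (M⁻¹.mulVec ((Matrix.toLin' M) u)) := by
    exact integral_map hφ.aemeasurable hH.aestronglyMeasurable
  have h2 : ∀ u, M⁻¹.mulVec ((Matrix.toLin' M) u) = u := by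
    intro u
    rw [Matrix.toLin'_apply, Matrix.mulVec_mulVec, Matrix.nonsing_inv_mul M
      (isUnit_iff_ne_zero.mpr hM), Matrix.one_mulVec]
  simp only [h2] at h1
  rw [← h1, hmap, integral_smul_measure, ENNReal.toReal_ofReal (by positivity)]
  rw [abs_inv]
  push_cast
  rw [Complex.real_smul]
  push_cast
  ring

lemma cov_integrable {n : ℕ} (M : Matrix (Fin n) (Fin n) ℝ) (hM : M.det ≠ 0)
    (g : (Fin n → ℝ) → ℂ) (hg : Continuous g)
    (h : Integrable (fun v => g (M⁻¹.mulVec v))) : Integrable g := by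
  have hmap := Real.map_matrix_volume_pi_eq_smul_volume_pi (M := M) hM
  have hφ : Continuous (Matrix.toLin' M) := LinearMap.continuous_of_finiteDimensional _
  have hH : Continuous (fun v => g (M⁻¹.mulVec v)) :=
    hg.comp (LinearMap.continuous_of_finiteDimensional (Matrix.toLin' M⁻¹))
  have h2 : ∀ u, M⁻¹.mulVec ((Matrix.toLin' M) u) = u := by
    intro u
    rw [Matrix.toLin'_apply, Matrix.mulVec_mulVec, Matrix.nonsing_inv_mul M
      (isUnit_iff_ne_zero.mpr hM), Matrix.one_mulVec]
  have h3 : Integrable (fun v => g (M⁻¹.mulVec v)) (Measure.map (Matrix.toLin' M) volume) := by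
    rw [hmap]
    refine (integrable_smul_measure ?_ ?_).mpr h
    · simp [hM, abs_eq_zero, inv_eq_zero]
    · exact ENNReal.ofReal_ne_top
  have h4 := (integrable_map_measure hH.aestronglyMeasurable hφ.aemeasurable).mp h3
  simpa only [Function.comp_def, h2] using h4


lemma mainCalc {n : ℕ} (Sg : Matrix (Fin n) (Fin n) ℝ) (hsymm : Sg.IsSymm) (hpos : Sg.PosDef)
    (z : Fin n → ℂ) (j k : Fin n) :
    Integrable (fun u : Fin n → ℝ =>
      Complex.exp (((-(qf Sg u) : ℝ) : ℂ) + ∑ i, (u i:ℂ) * z i) * ((u j:ℝ):ℂ) * ((u k:ℝ):ℂ)) ∧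
    (gaussConst Sg : ℂ) * ∫ u : Fin n → ℝ,
      Complex.exp (((-(qf Sg u) : ℝ) : ℂ) + ∑ i, (u i:ℂ) * z i) * ((u j:ℝ):ℂ) * ((u k:ℝ):ℂ)
      = mgfHess Sg z j k := by
  classical
  -- the square root of Sg
  obtain ⟨S, hSpsd, hSmul⟩ : ∃ S : Matrix (Fin n) (Fin n) ℝ, S.PosSemidef ∧ S * S = Sg := by
    open scoped MatrixOrder in
    exact ⟨CFC.sqrt Sg, (CFC.sqrt_nonneg Sg).posSemidef,
      CFC.sqrt_mul_sqrt_self Sg hpos.posSemidef.nonneg⟩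
  have hSsym : Sᵀ = S := by
    have h := hSpsd.1
    rwa [Matrix.IsHermitian, Matrix.conjTranspose_eq_transpose_of_trivial] at h
  have hdetSsq : S.det * S.det = Sg.det := by rw [← Matrix.det_mul, hSmul]
  have hdetS_nonneg : 0 ≤ S.det := by
    rw [hSpsd.1.det_eq_prod_eigenvalues]
    exact Finset.prod_nonneg fun i _ => hSpsd.eigenvalues_nonneg i
  have hdetS_ne : S.det ≠ 0 := by
    intro h
    rw [h, mul_zero] at hdetSsq
    exact absurd hdetSsq.symm (ne_of_gt hpos.det_pos)
  have hdetS_pos : 0 < S.det := lt_of_le_of_ne hdetS_nonneg (Ne.symm hdetS_ne)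
  have hdetS : S.det = Real.sqrt Sg.det := by
    rw [← hdetSsq, Real.sqrt_mul_self hdetS_nonneg]
  have hUnit : IsUnit S.det := isUnit_iff_ne_zero.mpr hdetS_ne
  set T : Matrix (Fin n) (Fin n) ℝ := S⁻¹ with hTdef
  have hTS : T * S = 1 := Matrix.nonsing_inv_mul S hUnit
  have hST : S * T = 1 := Matrix.mul_nonsing_inv S hUnit
  have hTT : T * T = Sg⁻¹ := by rw [hTdef, ← Matrix.mul_inv_rev, hSmul]
  have hTsym : Tᵀ = T := by rw [hTdef, Matrix.transpose_nonsing_inv, hSsym]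
  have hinvsym : Sg⁻¹ᵀ = Sg⁻¹ := by
    rw [Matrix.transpose_nonsing_inv, hsymm]
  -- eta
  set η : Fin n → ℂ := fun a => ∑ i, ((T a i : ℝ):ℂ) * z i with hη
  -- the integrand
  set G : (Fin n → ℝ) → ℂ := fun u =>
    Complex.exp (((-(qf Sg u) : ℝ) : ℂ) + ∑ i, (u i:ℂ) * z i) * ((u j:ℝ):ℂ) * ((u k:ℝ):ℂ)
    with hG
  have hGcont : Continuous G := by
    apply Continuous.mul
    apply Continuous.mul
    · apply Complex.continuous_exp.comp
      apply Continuous.add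
      · apply Complex.continuous_ofReal.comp
        apply Continuous.neg
        unfold qf
        unfold dotProduct Matrix.mulVec
        exact continuous_finset_sum _ fun i _ => (continuous_apply i).mul
          (continuous_finset_sum _ fun m _ => continuous_const.mul (continuous_apply m))
      · exact continuous_finset_sum _ fun i _ =>
          (Complex.continuous_ofReal.comp (continuous_apply i)).mul continuous_const
    · exact Complex.continuous_ofReal.comp (continuous_apply j)
    · exact Complex.continuous_ofReal.comp (continuous_apply k)
  -- the transformed integrand
  have hGT : ∀ v : Fin n → ℝ, G (T.mulVec v) =
      ∑ a, ∑ b, ((T j a:ℝ):ℂ) * ((T k b:ℝ):ℂ) *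
        (Complex.exp (-∑ i, ((v i:ℂ))^2 + ∑ i, η i * (v i:ℂ)) * ((v a : ℝ):ℂ) * ((v b:ℝ):ℂ)) := by
    intro v
    have hqf : qf Sg (T.mulVec v) = v ⬝ᵥ v := by
      unfold qf
      rw [Matrix.mulVec_mulVec]
      have hSgT : Sg * T = S := by
        rw [← hSmul, Matrix.mul_assoc, hST, Matrix.mul_one]
      rw [hSgT, dotProduct_mulVec, ← hSsym, Matrix.vecMul_transpose,
        Matrix.mulVec_mulVec, hST, Matrix.one_mulVec]
    have hlin : ∀ i, ((T.mulVec v) i : ℂ) = ∑ a, ((T i a:ℝ):ℂ) * ((v a:ℝ):ℂ) := by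
      intro i
      simp [Matrix.mulVec, dotProduct]
    have hsum : (∑ i, ((T.mulVec v) i : ℂ) * z i) = ∑ a, η a * ((v a:ℝ):ℂ) := by
      simp only [hlin, Finset.sum_mul]
      rw [Finset.sum_comm]
      apply Finset.sum_congr rfl
      intro a _
      rw [hη, Finset.sum_mul]
      apply Finset.sum_congr rfl
      intro i _
      have h' : Tᵀ a i = T a i := by rw [hTsym]
      rw [Matrix.transpose_apply] at h'
      rw [h']
      ring
    have hdot : ((-(v ⬝ᵥ v) : ℝ) : ℂ) = -∑ i, ((v i:ℂ))^2 := by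
      unfold dotProduct
      push_cast
      congr 1
      exact Finset.sum_congr rfl fun i _ => (sq ((v i : ℝ):ℂ)).symm
    rw [hG]
    simp only [hqf, hsum, hdot]
    simp only [hlin]
    rw [mul_assoc, Finset.sum_mul_sum, Finset.mul_sum]
    apply Finset.sum_congr rfl
    intro a _
    rw [Finset.mul_sum]
    apply Finset.sum_congr rfl
    intro b _
    ring
  -- integrability
  have hint_each : ∀ a b : Fin n, Integrable (fun v : Fin n → ℝ =>
      ((T j a:ℝ):ℂ) * ((T k b:ℝ):ℂ) *
        (Complex.exp (-∑ i, ((v i:ℂ))^2 + ∑ i, η i * (v i:ℂ)) * ((v a : ℝ):ℂ) * ((v b:ℝ):ℂ))) :=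
    fun a b => (gaussN_integrable η a b).const_mul _
  have hintT : Integrable (fun v => G (T.mulVec v)) := by
    have : Integrable (fun v : Fin n → ℝ => ∑ a, ∑ b, ((T j a:ℝ):ℂ) * ((T k b:ℝ):ℂ) *
        (Complex.exp (-∑ i, ((v i:ℂ))^2 + ∑ i, η i * (v i:ℂ)) * ((v a : ℝ):ℂ) * ((v b:ℝ):ℂ))) :=
      integrable_finset_sum _ fun a _ => integrable_finset_sum _ fun b _ => hint_each a b
    exact this.congr (ae_of_all _ fun v => (hGT v).symm)
  have hGint : Integrable G := cov_integrable S hdetS_ne G hGcont hintT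
  refine ⟨hGint, ?_⟩
  -- compute the integral
  rw [cov_integral S hdetS_ne G hGcont]
  have hval : ∫ v, G (T.mulVec v) = ∑ a, ∑ b, ((T j a:ℝ):ℂ) * ((T k b:ℝ):ℂ) *
      ((Real.sqrt π:ℂ)^n * Complex.exp ((∑ i, η i^2)/4) *
        ((if a = b then (1/2:ℂ) else 0) + η a * η b / 4)) := by
    rw [integral_congr_ae (ae_of_all _ hGT)]
    rw [integral_finset_sum _ fun a _ => integrable_finset_sum _ fun b _ => hint_each a b]
    apply Finset.sum_congr rfl
    intro a _
    rw [integral_finset_sum _ fun b _ => hint_each a b]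
    apply Finset.sum_congr rfl
    intro b _
    rw [integral_const_mul, gaussN]
  rw [hval]
  -- entry symmetry lemmas
  have hTent : ∀ p q, T p q = T q p := by
    intro p q
    have h' : Tᵀ q p = T q p := by rw [hTsym]
    rwa [Matrix.transpose_apply] at h'
  have hSient : ∀ p q, Sg⁻¹ p q = Sg⁻¹ q p := by
    intro p q
    have h' : Sg⁻¹ᵀ q p = Sg⁻¹ q p := by rw [hinvsym]
    rwa [Matrix.transpose_apply] at h'
  have hTTc : ∀ p q : Fin n, (∑ a, ((T p a:ℝ):ℂ) * ((T a q:ℝ):ℂ)) = ((Sg⁻¹ p q : ℝ):ℂ) := by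
    intro p q
    rw [← hTT, Matrix.mul_apply]
    push_cast
    rfl
  set X : Fin n → ℂ := (Sg⁻¹.map (fun a => (a:ℂ))).mulVec z with hX
  set Y : Fin n → ℂ := vecMul z (Sg⁻¹.map (fun a => (a:ℂ))) with hY
  have hα : (∑ a, ((T j a:ℝ):ℂ) * ((T k a:ℝ):ℂ)) = ((Sg⁻¹ j k : ℝ):ℂ) := by
    rw [← hTTc j k]
    exact Finset.sum_congr rfl fun a _ => by rw [hTent a k]
  have hβ : (∑ a, ((T j a:ℝ):ℂ) * η a) = X j := by
    have h1 : X j = ∑ i, ((Sg⁻¹ j i:ℝ):ℂ) * z i := by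
      simp [hX, Matrix.mulVec, dotProduct, Matrix.map_apply]
    rw [h1]
    calc (∑ a, ((T j a:ℝ):ℂ) * η a)
        = ∑ a, ∑ i, ((T j a:ℝ):ℂ) * ((T a i:ℝ):ℂ) * z i := by
          refine Finset.sum_congr rfl fun a _ => ?_
          rw [hη, Finset.mul_sum]
          exact Finset.sum_congr rfl fun i _ => by ring
      _ = ∑ i, ∑ a, ((T j a:ℝ):ℂ) * ((T a i:ℝ):ℂ) * z i := Finset.sum_comm
      _ = ∑ i, ((Sg⁻¹ j i:ℝ):ℂ) * z i := by
          refine Finset.sum_congr rfl fun i _ => ?_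
          rw [← Finset.sum_mul, hTTc j i]
  have hγ : (∑ b, ((T k b:ℝ):ℂ) * η b) = Y k := by
    have h1 : Y k = ∑ i, z i * ((Sg⁻¹ i k:ℝ):ℂ) := by
      simp [hY, Matrix.vecMul, dotProduct, Matrix.map_apply]
    rw [h1]
    calc (∑ b, ((T k b:ℝ):ℂ) * η b)
        = ∑ b, ∑ i, ((T k b:ℝ):ℂ) * ((T b i:ℝ):ℂ) * z i := by
          refine Finset.sum_congr rfl fun b _ => ?_
          rw [hη, Finset.mul_sum]
          exact Finset.sum_congr rfl fun i _ => by ring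
      _ = ∑ i, ∑ b, ((T k b:ℝ):ℂ) * ((T b i:ℝ):ℂ) * z i := Finset.sum_comm
      _ = ∑ i, z i * ((Sg⁻¹ i k:ℝ):ℂ) := by
          refine Finset.sum_congr rfl fun i _ => ?_
          rw [← Finset.sum_mul, hTTc k i, hSient k i]
          ring
  have hQ : (∑ i, η i^2) = qfC Sg⁻¹ z := by
    have h1 : qfC Sg⁻¹ z = ∑ i, z i * ∑ m, ((Sg⁻¹ i m:ℝ):ℂ) * z m := by
      simp [qfC, Matrix.mulVec, dotProduct, Matrix.map_apply]
    rw [h1]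
    calc (∑ a, η a^2)
        = ∑ a, ∑ i, ((T a i:ℝ):ℂ) * z i * η a := by
          refine Finset.sum_congr rfl fun a _ => ?_
          rw [sq, hη]
          conv_lhs => rw [Finset.sum_mul]
      _ = ∑ i, ∑ a, ((T a i:ℝ):ℂ) * z i * η a := Finset.sum_comm
      _ = ∑ i, ∑ a, ∑ m, ((T a i:ℝ):ℂ) * z i * (((T a m:ℝ):ℂ) * z m) := by
          refine Finset.sum_congr rfl fun i _ => Finset.sum_congr rfl fun a _ => ?_
          rw [hη, Finset.mul_sum]
      _ = ∑ i, ∑ m, ∑ a, ((T a i:ℝ):ℂ) * z i * (((T a m:ℝ):ℂ) * z m) := by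
          exact Finset.sum_congr rfl fun i _ => Finset.sum_comm
      _ = ∑ i, z i * ∑ m, ((Sg⁻¹ i m:ℝ):ℂ) * z m := by
          refine Finset.sum_congr rfl fun i _ => ?_
          rw [Finset.mul_sum]
          refine Finset.sum_congr rfl fun m _ => ?_
          have h2 : (∑ a, ((T a i:ℝ):ℂ) * ((T a m:ℝ):ℂ)) = ((Sg⁻¹ i m:ℝ):ℂ) := by
            rw [← hTTc i m]
            exact Finset.sum_congr rfl fun a _ => by rw [hTent a i]
          calc (∑ a, ((T a i:ℝ):ℂ) * z i * (((T a m:ℝ):ℂ) * z m))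
              = (∑ a, ((T a i:ℝ):ℂ) * ((T a m:ℝ):ℂ)) * (z i * z m) := by
                rw [Finset.sum_mul]
                exact Finset.sum_congr rfl fun a _ => by ring
            _ = z i * (((Sg⁻¹ i m:ℝ):ℂ) * z m) := by rw [h2]; ring
  -- the constant
  have hsqrtpow : Real.sqrt (π^n) = (Real.sqrt π)^n := by
    rw [show π^n = ((Real.sqrt π)^n)^2 by
      rw [← pow_mul, mul_comm, pow_mul, Real.sq_sqrt Real.pi_pos.le],
      Real.sqrt_sq (by positivity)]
  have hconstR : gaussConst Sg * |S.det|⁻¹ * (Real.sqrt π)^n = 1 := by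
    rw [gaussConst, hsqrtpow, abs_of_pos hdetS_pos, hdetS]
    have h1 : Real.sqrt Sg.det ≠ 0 := ne_of_gt (Real.sqrt_pos.mpr hpos.det_pos)
    have h2 : (Real.sqrt π)^n ≠ 0 := by positivity
    field_simp
  have hconstC : (gaussConst Sg : ℂ) * ((|S.det|⁻¹ : ℝ):ℂ) * ((Real.sqrt π:ℝ):ℂ)^n = 1 := by
    exact_mod_cast congrArg (Complex.ofReal) hconstR
  -- rewrite the double sum
  have hsum2 : (∑ a, ∑ b, ((T j a:ℝ):ℂ) * ((T k b:ℝ):ℂ) *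
      ((Real.sqrt π:ℂ)^n * Complex.exp ((∑ i, η i^2)/4) *
        ((if a = b then (1/2:ℂ) else 0) + η a * η b / 4)))
      = (Real.sqrt π:ℂ)^n * Complex.exp ((qfC Sg⁻¹ z)/4) *
        ((1/2) * ((Sg⁻¹ j k : ℝ):ℂ) + (1/4) * (X j * Y k)) := by
    rw [hQ]
    have step1 : (∑ a, ∑ b, ((T j a:ℝ):ℂ) * ((T k b:ℝ):ℂ) *
        ((Real.sqrt π:ℂ)^n * Complex.exp ((qfC Sg⁻¹ z)/4) *
          ((if a = b then (1/2:ℂ) else 0) + η a * η b / 4)))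
        = (Real.sqrt π:ℂ)^n * Complex.exp ((qfC Sg⁻¹ z)/4) *
          (∑ a, ∑ b, ((T j a:ℝ):ℂ) * ((T k b:ℝ):ℂ) *
            ((if a = b then (1/2:ℂ) else 0) + η a * η b / 4)) := by
      rw [Finset.mul_sum]
      refine Finset.sum_congr rfl fun a _ => ?_
      rw [Finset.mul_sum]
      exact Finset.sum_congr rfl fun b _ => by ring
    rw [step1]
    congr 1
    have split : (∑ a, ∑ b, ((T j a:ℝ):ℂ) * ((T k b:ℝ):ℂ) *
        ((if a = b then (1/2:ℂ) else 0) + η a * η b / 4))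
        = (∑ a, ∑ b, ((T j a:ℝ):ℂ) * ((T k b:ℝ):ℂ) * (if a = b then (1/2:ℂ) else 0))
          + ∑ a, ∑ b, ((T j a:ℝ):ℂ) * ((T k b:ℝ):ℂ) * (η a * η b / 4) := by
      rw [← Finset.sum_add_distrib]
      refine Finset.sum_congr rfl fun a _ => ?_
      rw [← Finset.sum_add_distrib]
      exact Finset.sum_congr rfl fun b _ => by ring
    rw [split]
    congr 1
    · -- diagonal part
      have h1 : ∀ a : Fin n, (∑ b, ((T j a:ℝ):ℂ) * ((T k b:ℝ):ℂ) * (if a = b then (1/2:ℂ) else 0))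
          = ((T j a:ℝ):ℂ) * ((T k a:ℝ):ℂ) * (1/2) := by
        intro a
        rw [Finset.sum_congr rfl (fun b _ => by
          rw [mul_ite, mul_zero] : ∀ b ∈ Finset.univ, ((T j a:ℝ):ℂ) * ((T k b:ℝ):ℂ) *
            (if a = b then (1/2:ℂ) else 0)
            = if a = b then ((T j a:ℝ):ℂ) * ((T k b:ℝ):ℂ) * (1/2) else 0)]
        rw [Finset.sum_ite_eq]
        simp
      rw [Finset.sum_congr rfl fun a _ => h1 a]
      rw [← Finset.sum_mul, hα]
      ring
    · -- off-diagonal part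
      have h2 : (∑ a, ∑ b, ((T j a:ℝ):ℂ) * ((T k b:ℝ):ℂ) * (η a * η b / 4))
          = (∑ a, ((T j a:ℝ):ℂ) * η a) * (∑ b, ((T k b:ℝ):ℂ) * η b) / 4 := by
        rw [Finset.sum_mul_sum, Finset.sum_div]
        refine Finset.sum_congr rfl fun a _ => ?_
        rw [Finset.sum_div]
        exact Finset.sum_congr rfl fun b _ => by ring
      rw [h2, hβ, hγ]
      ring
  rw [hsum2]
  have hmgf : mgfHess Sg z j k = ((1/2 : ℂ) * Complex.exp ((qfC Sg⁻¹ z)/4)) *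
      (((Sg⁻¹ j k : ℝ):ℂ) + (1/2) * (X j * Y k)) := by
    simp only [mgfHess, Matrix.smul_apply, Matrix.add_apply, Matrix.map_apply,
      Matrix.vecMulVec_apply, smul_eq_mul, ← hX, ← hY]
    rw [show ((1/4 : ℂ) * qfC Sg⁻¹ z) = (qfC Sg⁻¹ z)/4 by ring]
  rw [hmgf]
  linear_combination (Complex.exp ((qfC Sg⁻¹ z)/4) *
    ((1/2) * ((Sg⁻¹ j k : ℝ):ℂ) + (1/4) * (X j * Y k))) * hconstC


lemma zetaP_eq {n : ℕ} (Sg Th : Matrix (Fin n) (Fin n) ℝ) (w : Fin n → ℝ) (i : Fin n) :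
    zetaP Sg Th w i = ((-(Sg.mulVec w) i : ℝ) : ℂ) + (((Th.mulVec w) i : ℝ) : ℂ) * Complex.I := by
  simp only [zetaP, Matrix.mulVec, dotProduct, Matrix.add_apply, Matrix.map_apply,
    Matrix.smul_apply, smul_eq_mul]
  push_cast
  rw [Finset.sum_congr rfl (fun m _ => by ring :
    ∀ m ∈ Finset.univ, (-(Sg i m:ℂ) + Complex.I * (Th i m:ℂ)) * (w m:ℂ)
      = -((Sg i m:ℂ) * (w m:ℂ)) + ((Th i m:ℂ) * (w m:ℂ)) * Complex.I)]
  rw [Finset.sum_add_distrib, Finset.sum_neg_distrib, ← Finset.sum_mul]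

lemma zetaM_eq {n : ℕ} (Sg Th : Matrix (Fin n) (Fin n) ℝ) (w : Fin n → ℝ) (i : Fin n) :
    zetaM Sg Th w i = ((-(Sg.mulVec w) i : ℝ) : ℂ) - (((Th.mulVec w) i : ℝ) : ℂ) * Complex.I := by
  simp only [zetaM, Matrix.mulVec, dotProduct, Matrix.sub_apply, Matrix.map_apply,
    Matrix.smul_apply, smul_eq_mul]
  push_cast
  rw [Finset.sum_congr rfl (fun m _ => by ring :
    ∀ m ∈ Finset.univ, (-(Sg i m:ℂ) - Complex.I * (Th i m:ℂ)) * (w m:ℂ)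
      = -((Sg i m:ℂ) * (w m:ℂ)) - ((Th i m:ℂ) * (w m:ℂ)) * Complex.I)]
  rw [Finset.sum_sub_distrib, Finset.sum_neg_distrib, ← Finset.sum_mul]

lemma zetaM_conj {n : ℕ} (Sg Th : Matrix (Fin n) (Fin n) ℝ) (w : Fin n → ℝ) :
    zetaM Sg Th w = fun i => (starRingEnd ℂ) (zetaP Sg Th w i) := by
  funext i
  rw [zetaM_eq, zetaP_eq, _root_.map_add, _root_.map_mul, Complex.conj_ofReal, Complex.conj_ofReal,
    Complex.conj_I]
  ring

-- conjugation of mgfHess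
lemma mgfHess_conj {n : ℕ} (Sg : Matrix (Fin n) (Fin n) ℝ) (z : Fin n → ℂ) (j k : Fin n) :
    mgfHess Sg (fun i => (starRingEnd ℂ) (z i)) j k = (starRingEnd ℂ) (mgfHess Sg z j k) := by
  have hqfC : qfC Sg⁻¹ (fun i => (starRingEnd ℂ) (z i)) = (starRingEnd ℂ) (qfC Sg⁻¹ z) := by
    simp [qfC, Matrix.mulVec, dotProduct, Matrix.map_apply, _root_.map_sum, _root_.map_mul,
      Complex.conj_ofReal]
  have hX : ∀ p, ((Sg⁻¹.map (fun a => (a:ℂ))).mulVec (fun i => (starRingEnd ℂ) (z i))) p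
      = (starRingEnd ℂ) (((Sg⁻¹.map (fun a => (a:ℂ))).mulVec z) p) := by
    intro p
    simp [Matrix.mulVec, dotProduct, Matrix.map_apply, _root_.map_sum, _root_.map_mul,
      Complex.conj_ofReal]
  have hY : ∀ p, (vecMul (fun i => (starRingEnd ℂ) (z i)) (Sg⁻¹.map (fun a => (a:ℂ)))) p
      = (starRingEnd ℂ) ((vecMul z (Sg⁻¹.map (fun a => (a:ℂ)))) p) := by
    intro p
    simp [Matrix.vecMul, dotProduct, Matrix.map_apply, _root_.map_sum, _root_.map_mul,
      Complex.conj_ofReal]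
  simp only [mgfHess, Matrix.smul_apply, Matrix.add_apply, Matrix.map_apply,
    Matrix.vecMulVec_apply, smul_eq_mul, hqfC, hX, hY]
  simp only [_root_.map_mul, _root_.map_add, map_div₀, _root_.map_one, map_ofNat,
    Complex.conj_ofReal, ← Complex.exp_conj]


/-- with `ζ := (−Σ + iΘ)w`,
`π^{−n/2}√(det Σ) ∫ e^{−uᵀΣu} sin(uᵀΘw) e^{−uᵀΣw} u uᵀ du
  = Im((1/2) e^{(1/4)ζᵀΣ⁻¹ζ}(Σ⁻¹ + (1/2)Σ⁻¹ζζᵀΣ⁻¹))`,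
entrywise, with absolute convergence; equivalently the left-hand side equals
`(1/(2i))(φ''_Σ((−Σ+iΘ)w) − φ''_Σ(−(Σ+iΘ)w))`. -/
theorem stmt12 {n : ℕ} (hn : 1 ≤ n) (Sg : Matrix (Fin n) (Fin n) ℝ)
    (hsymm : Sg.IsSymm) (hpos : Sg.PosDef)
    (Th : Matrix (Fin n) (Fin n) ℝ) (hanti : Thᵀ = -Th) (w : Fin n → ℝ) :
    (∀ j k : Fin n,
      Integrable (fun u : Fin n → ℝ =>
        Real.exp (-(qf Sg u)) * Real.sin (u ⬝ᵥ Th.mulVec w) *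
          Real.exp (-(u ⬝ᵥ Sg.mulVec w)) * (u j * u k))) ∧
    (∀ j k : Fin n,
      gaussConst Sg *
          ∫ u : Fin n → ℝ,
            Real.exp (-(qf Sg u)) * Real.sin (u ⬝ᵥ Th.mulVec w) *
              Real.exp (-(u ⬝ᵥ Sg.mulVec w)) * (u j * u k) =
        (mgfHess Sg (zetaP Sg Th w) j k).im) ∧
    ∀ j k : Fin n,
      ((gaussConst Sg *
          ∫ u : Fin n → ℝ,
            Real.exp (-(qf Sg u)) * Real.sin (u ⬝ᵥ Th.mulVec w) *
              Real.exp (-(u ⬝ᵥ Sg.mulVec w)) * (u j * u k) : ℝ) : ℂ) =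
        (1 / (2 * Complex.I)) *
          (mgfHess Sg (zetaP Sg Th w) j k - mgfHess Sg (zetaM Sg Th w) j k) := by
  classical
  set ζ : Fin n → ℂ := zetaP Sg Th w with hζdef
  -- the complex integrand
  set Gf : Fin n → Fin n → (Fin n → ℝ) → ℂ := fun j k u =>
    Complex.exp (((-(qf Sg u) : ℝ) : ℂ) + ∑ i, (u i:ℂ) * ζ i) * ((u j:ℝ):ℂ) * ((u k:ℝ):ℂ)
    with hGf
  have hmain : ∀ j k : Fin n, Integrable (Gf j k) ∧
      (gaussConst Sg : ℂ) * ∫ u, Gf j k u = mgfHess Sg ζ j k :=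
    fun j k => mainCalc Sg hsymm hpos ζ j k
  -- pointwise identity
  have hsumz : ∀ u : Fin n → ℝ, (∑ i, (u i:ℂ) * ζ i)
      = ((-(u ⬝ᵥ Sg.mulVec w) : ℝ):ℂ) + ((u ⬝ᵥ Th.mulVec w : ℝ):ℂ) * Complex.I := by
    intro u
    simp only [hζdef, zetaP_eq]
    rw [Finset.sum_congr rfl (fun i _ => by push_cast; ring :
      ∀ i ∈ Finset.univ, (u i:ℂ) * (((-(Sg.mulVec w) i : ℝ):ℂ)
          + (((Th.mulVec w) i : ℝ):ℂ) * Complex.I)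
        = -(((u i:ℝ):ℂ) * (((Sg.mulVec w) i : ℝ):ℂ))
          + (((u i:ℝ):ℂ) * (((Th.mulVec w) i : ℝ):ℂ)) * Complex.I)]
    rw [Finset.sum_add_distrib, Finset.sum_neg_distrib, ← Finset.sum_mul]
    rw [show (u ⬝ᵥ Sg.mulVec w) = ∑ i, u i * (Sg.mulVec w) i from rfl,
      show (u ⬝ᵥ Th.mulVec w) = ∑ i, u i * (Th.mulVec w) i from rfl]
    push_cast
    ring
  have hpt : ∀ (j k : Fin n) (u : Fin n → ℝ),
      Real.exp (-(qf Sg u)) * Real.sin (u ⬝ᵥ Th.mulVec w) *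
        Real.exp (-(u ⬝ᵥ Sg.mulVec w)) * (u j * u k) = (Gf j k u).im := by
    intro j k u
    rw [hGf]
    simp only [hsumz u]
    have hE : (((-(qf Sg u) : ℝ) : ℂ) + (((-(u ⬝ᵥ Sg.mulVec w) : ℝ):ℂ)
        + ((u ⬝ᵥ Th.mulVec w : ℝ):ℂ) * Complex.I))
        = ((-(qf Sg u) + -(u ⬝ᵥ Sg.mulVec w) : ℝ) : ℂ)
          + ((u ⬝ᵥ Th.mulVec w : ℝ):ℂ) * Complex.I := by push_cast; ring
    rw [hE]
    simp only [Complex.mul_im, Complex.exp_im, Complex.exp_re, Complex.add_re,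
      Complex.ofReal_re, Complex.mul_re, Complex.I_re, Complex.I_im, Complex.add_im,
      Complex.ofReal_im, Complex.mul_im]
    norm_num [Real.exp_add]
    ring
  refine ⟨?_, ?_, ?_⟩
  · intro j k
    exact ((hmain j k).1.im).congr (ae_of_all _ fun u => (hpt j k u).symm)
  · intro j k
    have h1 : ∫ u : Fin n → ℝ,
        Real.exp (-(qf Sg u)) * Real.sin (u ⬝ᵥ Th.mulVec w) *
          Real.exp (-(u ⬝ᵥ Sg.mulVec w)) * (u j * u k) = ∫ u, (Gf j k u).im :=
      integral_congr_ae (ae_of_all _ fun u => hpt j k u)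
    have h2 : ∫ u, (Gf j k u).im = (∫ u, Gf j k u).im := by
      have := integral_im (μ := (volume : Measure (Fin n → ℝ))) (hmain j k).1
      simpa using this
    rw [h1, h2]
    have h3 := congrArg Complex.im (hmain j k).2
    simpa [Complex.mul_im] using h3
  · intro j k
    have h2 : gaussConst Sg * ∫ u : Fin n → ℝ,
        Real.exp (-(qf Sg u)) * Real.sin (u ⬝ᵥ Th.mulVec w) *
          Real.exp (-(u ⬝ᵥ Sg.mulVec w)) * (u j * u k)
        = (mgfHess Sg (zetaP Sg Th w) j k).im := by
      have h1 : ∫ u : Fin n → ℝ,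
          Real.exp (-(qf Sg u)) * Real.sin (u ⬝ᵥ Th.mulVec w) *
            Real.exp (-(u ⬝ᵥ Sg.mulVec w)) * (u j * u k) = ∫ u, (Gf j k u).im :=
        integral_congr_ae (ae_of_all _ fun u => hpt j k u)
      have h2' : ∫ u, (Gf j k u).im = (∫ u, Gf j k u).im := by
        have := integral_im (μ := (volume : Measure (Fin n → ℝ))) (hmain j k).1
        simpa using this
      rw [h1, h2']
      have h3 := congrArg Complex.im (hmain j k).2
      simpa [Complex.mul_im] using h3
    rw [h2]
    have hM : mgfHess Sg (zetaM Sg Th w) j k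
        = (starRingEnd ℂ) (mgfHess Sg (zetaP Sg Th w) j k) := by
      rw [zetaM_conj, mgfHess_conj]
    rw [hM, Complex.sub_conj]
    set P := mgfHess Sg (zetaP Sg Th w) j k
    rw [show ((2 * P.im : ℝ) : ℂ) = 2 * (P.im : ℂ) by push_cast; ring]
    have hI : Complex.I ≠ 0 := Complex.I_ne_zero
    field_simp
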